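/- Let H ∈ Matrix n n ℂ be Hermitian, let Δ > 0, and suppose every eigenvalue ω of H satisfies ω = 0 or |ω| ≥ Δ. Let Q be the orthogonal projection onto the orthogonal complement of the kernel of H, let ρ be positive semidefinite, let N ∈ ℕ and let c : {−N,…,N} → ℝ be nonnegative coefficients. Define F := ∑_{k=−N}^{N} c_k · exp(−i·k·H) and A(ω) := ∑_{k=−N}^{N} c_k · exp(−i·k·ω) for ω ∈ ℝ. Then Re Tr( F·(Q·ρ·Q)·F* ) ≤ ( sup_{ω ∈ ℝ, |ω| ≥ Δ} |A(ω)|² ) · Re Tr(Q·ρ·Q). -/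

import Mathlib

open Matrix NormedSpace
open scoped Matrix.Norms.L2Operator ComplexOrder

/-- Eigenstate filtering bound: for `F = ∑_k c_k exp(−i k H)` with nonnegative real
coefficients and `A(ω) = ∑_k c_k exp(−i k ω)`,
`Re Tr(F (QρQ) F*) ≤ (sup_{|ω| ≥ Δ} |A(ω)|²) · Re Tr(QρQ)`,
where `Q` is the orthogonal projection onto the orthogonal complement of `ker H`.
Indices `k ∈ {−N,…,N}` are encoded as `k : Fin (2N+1)` with integer value `(k : ℤ) − N`. -/
theorem stmt11 (n : ℕ) (hn : 1 ≤ n)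
    (H : Matrix (Fin n) (Fin n) ℂ) (hH : H.IsHermitian)
    (Δ : ℝ) (hΔ : 0 < Δ)
    (hspec : ∀ μ ∈ spectrum ℂ H, μ = 0 ∨ Δ ≤ ‖μ‖)
    (Q : Matrix (Fin n) (Fin n) ℂ)
    (hQherm : Q.IsHermitian) (hQidem : Q * Q = Q)
    (hQker : ∀ v : Fin n → ℂ, Q.mulVec v = 0 ↔ H.mulVec v = 0)
    (ρ : Matrix (Fin n) (Fin n) ℂ) (hρ : ρ.PosSemidef)
    (N : ℕ) (c : Fin (2 * N + 1) → ℝ) (hc : ∀ k, 0 ≤ c k)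
    (F : Matrix (Fin n) (Fin n) ℂ)
    (hF : F = ∑ k : Fin (2 * N + 1), (c k : ℂ) •
        exp ((-(Complex.I * (((k : ℤ) - (N : ℤ) : ℤ) : ℂ))) • H))
    (A : ℝ → ℂ)
    (hA : ∀ ω : ℝ, A ω = ∑ k : Fin (2 * N + 1),
        (c k : ℂ) * Complex.exp (-(Complex.I * (((k : ℤ) - (N : ℤ) : ℤ) : ℂ) * (ω : ℂ)))) :
    ((F * (Q * ρ * Q) * Fᴴ).trace).re ≤
      sSup {x : ℝ | ∃ ω : ℝ, Δ ≤ |ω| ∧ x = ‖A ω‖ ^ 2} *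
        ((Q * ρ * Q).trace).re := by
  classical
  set d : Fin n → ℝ := hH.eigenvalues with hd
  set U : Matrix (Fin n) (Fin n) ℂ := (hH.eigenvectorUnitary : Matrix (Fin n) (Fin n) ℂ)
    with hUdef
  have hU1 : star U * U = 1 := (Matrix.mem_unitaryGroup_iff').mp hH.eigenvectorUnitary.2
  have hU2 : U * star U = 1 := (Matrix.mem_unitaryGroup_iff).mp hH.eigenvectorUnitary.2
  set D : Matrix (Fin n) (Fin n) ℂ := Matrix.diagonal (fun i => (d i : ℂ)) with hDdef
  have hHD : H = U * D * star U := by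
    have h := hH.spectral_theorem
    exact h.trans rfl
  have hφH : star U * H * U = D := by
    rw [hHD]
    simp only [← Matrix.mul_assoc]
    rw [hU1, Matrix.one_mul, Matrix.mul_assoc, hU1, Matrix.mul_one]
  have φmul : ∀ X Y : Matrix (Fin n) (Fin n) ℂ,
      star U * (X * Y) * U = (star U * X * U) * (star U * Y * U) := by
    intro X Y
    simp only [Matrix.mul_assoc]
    rw [← Matrix.mul_assoc U (star U) (Y * U), hU2, Matrix.one_mul]
  have φtrace : ∀ X : Matrix (Fin n) (Fin n) ℂ, (star U * X * U).trace = X.trace := by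
    intro X
    rw [Matrix.trace_mul_cycle, hU2, Matrix.one_mul]
  have φct : ∀ X : Matrix (Fin n) (Fin n) ℂ, star U * Xᴴ * U = (star U * X * U)ᴴ := by
    intro X
    simp [Matrix.conjTranspose_mul, Matrix.mul_assoc, Matrix.star_eq_conjTranspose]
  have φexp : ∀ X : Matrix (Fin n) (Fin n) ℂ,
      star U * exp X * U = exp (star U * X * U) := by
    intro X
    let u : (Matrix (Fin n) (Fin n) ℂ)ˣ := ⟨U, star U, hU2, hU1⟩
    have h := Matrix.exp_units_conj' u X
    exact h.symm
  -- the diagonal form of F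
  set a : Fin n → ℂ := fun i => A (d i) with ha
  have hexpk : ∀ k : Fin (2 * N + 1),
      star U * exp ((-(Complex.I * (((k : ℤ) - (N : ℤ) : ℤ) : ℂ))) • H) * U
        = Matrix.diagonal (fun i =>
            Complex.exp (-(Complex.I * (((k : ℤ) - (N : ℤ) : ℤ) : ℂ) * (d i : ℂ)))) := by
    intro k
    set s : ℂ := -(Complex.I * (((k : ℤ) - (N : ℤ) : ℤ) : ℂ)) with hs
    have h1 : star U * (s • H) * U = s • D := by
      rw [Matrix.mul_smul, Matrix.smul_mul, hφH]
    have h2 : s • D = Matrix.diagonal (fun i => s * (d i : ℂ)) := by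
      rw [hDdef]
      ext i j
      by_cases h : i = j <;>
        simp [Matrix.diagonal_apply, h, Matrix.smul_apply, smul_eq_mul]
    rw [φexp, h1, h2, Matrix.exp_diagonal]
    congr 1
    funext i
    rw [Pi.exp_def]
    rw [← Complex.exp_eq_exp_ℂ]
    rw [hs]
    ring_nf
  have hφF : star U * F * U = Matrix.diagonal a := by
    rw [hF, Finset.mul_sum, Finset.sum_mul]
    have : ∀ k : Fin (2 * N + 1),
        star U * ((c k : ℂ) • exp ((-(Complex.I * (((k : ℤ) - (N : ℤ) : ℤ) : ℂ))) • H)) * U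
          = (c k : ℂ) • Matrix.diagonal (fun i =>
              Complex.exp (-(Complex.I * (((k : ℤ) - (N : ℤ) : ℤ) : ℂ) * (d i : ℂ)))) := by
      intro k
      rw [Matrix.mul_smul, Matrix.smul_mul, hexpk]
    rw [Finset.sum_congr rfl fun k _ => this k]
    ext i j
    by_cases h : i = j
    · subst h
      simp only [Matrix.sum_apply, Matrix.smul_apply, Matrix.diagonal_apply_eq, smul_eq_mul, ha,
        hA (d i)]
    · simp [Matrix.sum_apply, Matrix.diagonal_apply_ne _ h, h]
  -- the diagonal form of Q
  set q : Fin n → ℂ := fun i => if d i = 0 then 0 else 1 with hq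
  set P : Matrix (Fin n) (Fin n) ℂ := star U * Q * U with hP
  have hPherm : Pᴴ = P := by
    rw [hP, ← φct, hQherm.eq]
  have hPidem : P * P = P := by
    rw [hP, ← φmul, hQidem]
  have hPker : ∀ w : Fin n → ℂ, P.mulVec w = 0 ↔ D.mulVec w = 0 := by
    intro w
    constructor
    · intro h
      have h1 : Q.mulVec (U.mulVec w) = 0 := by
        have h2 : U.mulVec (P.mulVec w) = 0 := by rw [h, Matrix.mulVec_zero]
        have h3 : U.mulVec (P.mulVec w) = Q.mulVec (U.mulVec w) := by
          rw [hP]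
          simp only [Matrix.mulVec_mulVec]
          rw [← Matrix.mul_assoc, ← Matrix.mul_assoc, hU2, Matrix.one_mul]
        rwa [h3] at h2
      have h4 : H.mulVec (U.mulVec w) = 0 := (hQker _).mp h1
      have h5 : (star U).mulVec (H.mulVec (U.mulVec w)) = D.mulVec w := by
        simp only [Matrix.mulVec_mulVec]
        rw [← Matrix.mul_assoc, ← hφH]
      rw [← h5, h4, Matrix.mulVec_zero]
    · intro h
      have h4 : H.mulVec (U.mulVec w) = 0 := by
        have h5 : H.mulVec (U.mulVec w) = U.mulVec (D.mulVec w) := by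
          simp only [Matrix.mulVec_mulVec]
          rw [hHD, Matrix.mul_assoc (U * D), hU1, Matrix.mul_one]
        rw [h5, h, Matrix.mulVec_zero]
      have h1 : Q.mulVec (U.mulVec w) = 0 := (hQker _).mpr h4
      rw [hP]
      simp only [Matrix.mulVec_mulVec] at h1 ⊢
      rw [Matrix.mul_assoc, ← Matrix.mulVec_mulVec, h1, Matrix.mulVec_zero]
  -- entries of P
  have hDsingle : ∀ j : Fin n, d j = 0 → D.mulVec (Pi.single j 1) = 0 := by
    intro j hj
    rw [hDdef, Matrix.diagonal_mulVec_single]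
    simp [hj]
  have hPcol0 : ∀ i j : Fin n, d j = 0 → P i j = 0 := by
    intro i j hj
    have h := (hPker (Pi.single j 1)).mpr (hDsingle j hj)
    have := congrFun h i
    simpa [Matrix.mulVec_single] using this
  have hProw0 : ∀ i j : Fin n, d i = 0 → P i j = 0 := by
    intro i j hi
    have h := congrFun (congrFun hPherm i) j
    rw [Matrix.conjTranspose_apply] at h
    rw [← h, hPcol0 j i hi, star_zero]
  have hPcol1 : ∀ i j : Fin n, d j ≠ 0 → P i j = if i = j then 1 else 0 := by
    intro i j hj
    set w : Fin n → ℂ := (Pi.single j 1 : Fin n → ℂ) - P.mulVec (Pi.single j 1) with hwdef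
    have hw : D.mulVec w = 0 := by
      apply (hPker _).mp
      rw [hwdef, Matrix.mulVec_sub, Matrix.mulVec_mulVec, hPidem]
      simp
    have hwzero : ∀ i', d i' ≠ 0 → w i' = 0 := by
      intro i' hi'
      have h := congrFun hw i'
      rw [hDdef, Matrix.mulVec_diagonal] at h
      have h' : (d i' : ℂ) * w i' = 0 := h
      rcases mul_eq_zero.mp h' with h | h
      · exact absurd (by exact_mod_cast h) hi'
      · exact h
    by_cases hi : d i = 0
    · rw [hProw0 i j hi]
      have hij : i ≠ j := fun h => hj (h ▸ hi)
      simp [hij]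
    · have h := hwzero i hi
      rw [hwdef, Pi.sub_apply, sub_eq_zero] at h
      have h2 : P.mulVec (Pi.single j 1) i = P i j := by
        simp [Matrix.mulVec_single]
      rw [h2] at h
      rw [← h, Pi.single_apply]
  have hφQ : P = Matrix.diagonal q := by
    ext i j
    by_cases hj : d j = 0
    · rw [hPcol0 i j hj]
      by_cases h : i = j
      · subst h; simp [Matrix.diagonal_apply_eq, hq, hj]
      · simp [Matrix.diagonal_apply_ne _ h]
    · rw [hPcol1 i j hj]
      by_cases h : i = j
      · subst h; simp [hq, hj]
      · simp [Matrix.diagonal_apply_ne _ h, h]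
  -- conjugated density matrix
  set ρ' : Matrix (Fin n) (Fin n) ℂ := star U * ρ * U with hρ'def
  have hρ'psd : ρ'.PosSemidef := by
    have h := hρ.conjTranspose_mul_mul_same U
    rw [hρ'def]
    simpa [Matrix.star_eq_conjTranspose] using h
  have hdiagρ' : ∀ i, ∃ r : ℝ, 0 ≤ r ∧ ρ' i i = (r : ℂ) := by
    intro i
    have h0 : (0 : ℂ) ≤ ρ' i i := by
      have h := hρ'psd.dotProduct_mulVec_nonneg (Pi.single i 1)
      have e : dotProduct (star (Pi.single i (1:ℂ))) (ρ' *ᵥ (Pi.single i 1))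
          = ρ' i i := by
        simp [dotProduct, Matrix.mulVec_single, Pi.single_apply, apply_ite,
          Finset.sum_ite_eq]
      rwa [e] at h
    have him : (ρ' i i).im = 0 := ((Complex.le_def.mp h0).2).symm
    refine ⟨(ρ' i i).re, (Complex.le_def.mp h0).1, ?_⟩
    apply Complex.ext
    · simp
    · simp [him]
  -- diagonalized forms of the two traces
  have hM1 : star U * (F * (Q * ρ * Q) * Fᴴ) * U
      = Matrix.diagonal a * (Matrix.diagonal q * (ρ' * (Matrix.diagonal q
          * (Matrix.diagonal a)ᴴ))) := by
    simp only [φmul]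
    rw [φct F, hφF, ← hP, hφQ, ← hρ'def]
    simp only [Matrix.mul_assoc]
  have hM2 : star U * (Q * ρ * Q) * U
      = Matrix.diagonal q * (ρ' * Matrix.diagonal q) := by
    simp only [φmul]
    rw [← hP, hφQ, ← hρ'def]
    simp only [Matrix.mul_assoc]
  have htr1 : ((F * (Q * ρ * Q) * Fᴴ).trace).re
      = ∑ i, (a i * (q i * (ρ' i i * (q i * star (a i))))).re := by
    rw [← φtrace (F * (Q * ρ * Q) * Fᴴ), hM1, Matrix.trace, ← Complex.re_sum]
    congr 1
    refine Finset.sum_congr rfl fun i _ => ?_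
    simp [Matrix.diag, Matrix.diagonal_mul, Matrix.mul_diagonal,
      Matrix.diagonal_conjTranspose, Pi.star_apply, mul_assoc]
  have htr2 : (((Q * ρ * Q)).trace).re = ∑ i, (q i * (ρ' i i * q i)).re := by
    rw [← φtrace (Q * ρ * Q), hM2, Matrix.trace, ← Complex.re_sum]
    congr 1
    refine Finset.sum_congr rfl fun i _ => ?_
    simp [Matrix.diag, Matrix.diagonal_mul, Matrix.mul_diagonal, mul_assoc]
  -- the sup set
  have habs : ∀ ω : ℝ, ‖A ω‖ ≤ ∑ k, c k := by
    intro ω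
    rw [hA]
    refine le_trans (norm_sum_le _ _) (le_of_eq ?_)
    refine Finset.sum_congr rfl fun k _ => ?_
    rw [norm_mul, Complex.norm_of_nonneg (hc k), Complex.norm_exp]
    have : (-(Complex.I * (((k : ℤ) - (N : ℤ) : ℤ) : ℂ) * (ω : ℂ))).re = 0 := by
      simp [Complex.mul_re, Complex.mul_im]
    rw [this, Real.exp_zero, mul_one]
  have hbdd : BddAbove {x : ℝ | ∃ ω : ℝ, Δ ≤ |ω| ∧ x = ‖A ω‖ ^ 2} := by
    refine ⟨(∑ k, c k) ^ 2, ?_⟩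
    rintro x ⟨ω, -, rfl⟩
    exact pow_le_pow_left₀ (norm_nonneg _) (habs ω) 2
  -- conclude
  rw [htr1, htr2, Finset.mul_sum]
  refine Finset.sum_le_sum fun i _ => ?_
  obtain ⟨r, hr0, hrr⟩ := hdiagρ' i
  by_cases hdi : d i = 0
  · have hq0 : q i = 0 := by simp [hq, hdi]
    simp [hq0]
  · have hq1 : q i = 1 := by simp [hq, hdi]
    have hΔ' : Δ ≤ |d i| := by
      have hsp : (d i : ℂ) ∈ spectrum ℂ H := by
        have h := hH.eigenvalues_mem_spectrum_real i
        have h2 := (spectrum.algebraMap_mem_iff ℂ).mpr h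
        simpa using h2
      rcases hspec _ hsp with h0 | h1
      · exact absurd (Complex.ofReal_eq_zero.mp h0) hdi
      · rwa [Complex.norm_real, Real.norm_eq_abs] at h1
    have hmem : ‖a i‖ ^ 2 ∈
        {x : ℝ | ∃ ω : ℝ, Δ ≤ |ω| ∧ x = ‖A ω‖ ^ 2} :=
      ⟨d i, hΔ', rfl⟩
    have hle : ‖a i‖ ^ 2
        ≤ sSup {x : ℝ | ∃ ω : ℝ, Δ ≤ |ω| ∧ x = ‖A ω‖ ^ 2} :=
      le_csSup hbdd hmem
    rw [hq1, hrr]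
    have e1 : a i * ((1 : ℂ) * ((r : ℂ) * ((1 : ℂ) * star (a i))))
        = ((r * ‖a i‖ ^ 2 : ℝ) : ℂ) := by
      rw [Complex.star_def]
      have : a i * ((1 : ℂ) * ((r : ℂ) * ((1 : ℂ) * (starRingEnd ℂ) (a i))))
          = (r : ℂ) * (a i * (starRingEnd ℂ) (a i)) := by ring
      rw [this, Complex.mul_conj, ← Complex.ofReal_mul]
      norm_cast
      rw [Complex.sq_norm]
    have e2 : ((1 : ℂ) * ((r : ℂ) * (1 : ℂ))).re = r := by simp
    rw [e1, e2, Complex.ofReal_re]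
    calc r * ‖a i‖ ^ 2 = ‖a i‖ ^ 2 * r := by ring
      _ ≤ _ := mul_le_mul_of_nonneg_right hle hr0
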